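/- For every real number k > 0, the supremum over all pairs of parameters s < t of the chord-arc ratio of the logarithmic spiral equals √(k² + 1)/k; that is, sSup { (∫_s^t ‖φ'(r)‖ dr) / ‖φ(t) − φ(s)‖ : s, t ∈ ℝ, s < t } = √(k² + 1) / k. In particular, the distortion of the logarithmic spiral (including its center) equals √(k² + 1)/k. -/

import Mathlib

open Real

lemma eucl_norm_pair (a b : ℝ) :
    ‖(WithLp.equiv 2 (Fin 2 → ℝ)).symm ![a, b]‖ = Real.sqrt (a ^ 2 + b ^ 2) := by
  rw [EuclideanSpace.norm_eq]
  simp [Fin.sum_univ_two, Real.norm_eq_abs, sq_abs]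

lemma eucl_sub_pair (a b c d : ℝ) :
    (WithLp.equiv 2 (Fin 2 → ℝ)).symm ![a, b] - (WithLp.equiv 2 (Fin 2 → ℝ)).symm ![c, d]
      = (WithLp.equiv 2 (Fin 2 → ℝ)).symm ![a - c, b - d] := by
  ext i
  fin_cases i <;> rfl

lemma spiral_hasDerivAt (k r : ℝ) :
    HasDerivAt (fun s : ℝ => (WithLp.equiv 2 (Fin 2 → ℝ)).symm
        ![Real.exp (k * s) * Real.cos s, Real.exp (k * s) * Real.sin s])
      ((WithLp.equiv 2 (Fin 2 → ℝ)).symm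
        ![Real.exp (k * r) * (k * Real.cos r - Real.sin r),
          Real.exp (k * r) * (k * Real.sin r + Real.cos r)]) r := by
  have h1 : HasDerivAt (fun s : ℝ => Real.exp (k * s) * Real.cos s)
      (Real.exp (k * r) * (k * Real.cos r - Real.sin r)) r := by
    have := (((hasDerivAt_id r).const_mul k).exp.mul (Real.hasDerivAt_cos r))
    simp only [id_def, Pi.mul_def] at this
    exact this.congr_deriv (by ring)
  have h2 : HasDerivAt (fun s : ℝ => Real.exp (k * s) * Real.sin s)
      (Real.exp (k * r) * (k * Real.sin r + Real.cos r)) r := by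
    have := (((hasDerivAt_id r).const_mul k).exp.mul (Real.hasDerivAt_sin r))
    simp only [id_def, Pi.mul_def] at this
    exact this.congr_deriv (by ring)
  have hp : HasDerivAt (fun s : ℝ =>
      (![Real.exp (k * s) * Real.cos s, Real.exp (k * s) * Real.sin s] : Fin 2 → ℝ))
      ![Real.exp (k * r) * (k * Real.cos r - Real.sin r),
        Real.exp (k * r) * (k * Real.sin r + Real.cos r)] r := by
    rw [hasDerivAt_pi]
    intro i
    fin_cases i
    · simpa using h1
    · simpa using h2
  exact ((PiLp.continuousLinearEquiv 2 ℝ (fun _ : Fin 2 => ℝ)).symm).hasFDerivAt.comp_hasDerivAt r hp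

/-- For every `k > 0`, the supremum over all pairs of parameters `s < t` of the
arc-length-to-chord ratio of the logarithmic spiral `φ(s) = e^{ks} (cos s, sin s)`
equals `√(k² + 1)/k`; this is the distortion of the spiral (including its center). -/
theorem log_spiral_distortion (k : ℝ) (hk : 0 < k)
    (φ : ℝ → EuclideanSpace ℝ (Fin 2))
    (hφ : φ = fun s => (WithLp.equiv 2 (Fin 2 → ℝ)).symm
      ![Real.exp (k * s) * Real.cos s, Real.exp (k * s) * Real.sin s]) :
    sSup {x : ℝ | ∃ s t : ℝ, s < t ∧
        x = (∫ r in s..t, ‖deriv φ r‖) / ‖φ t - φ s‖} =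
      Real.sqrt (k ^ 2 + 1) / k := by
  subst hφ
  have hk' : k ≠ 0 := ne_of_gt hk
  have hC0 : 0 < Real.sqrt (k ^ 2 + 1) := Real.sqrt_pos.mpr (by positivity)
  -- norm of derivative
  have hdn : ∀ r : ℝ, ‖deriv (fun s : ℝ => (WithLp.equiv 2 (Fin 2 → ℝ)).symm
      ![Real.exp (k * s) * Real.cos s, Real.exp (k * s) * Real.sin s]) r‖
      = Real.sqrt (k ^ 2 + 1) * Real.exp (k * r) := by
    intro r
    rw [(spiral_hasDerivAt k r).deriv, eucl_norm_pair]
    have : (Real.exp (k * r) * (k * Real.cos r - Real.sin r)) ^ 2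
        + (Real.exp (k * r) * (k * Real.sin r + Real.cos r)) ^ 2
        = (k ^ 2 + 1) * Real.exp (k * r) ^ 2 := by
      have := Real.sin_sq_add_cos_sq r
      nlinarith [this]
    rw [this, Real.sqrt_mul (by positivity), Real.sqrt_sq (Real.exp_pos _).le]
  -- arc length integral
  have hint : ∀ s t : ℝ, (∫ r in s..t, ‖deriv (fun s : ℝ => (WithLp.equiv 2 (Fin 2 → ℝ)).symm
      ![Real.exp (k * s) * Real.cos s, Real.exp (k * s) * Real.sin s]) r‖)
      = Real.sqrt (k ^ 2 + 1) * ((Real.exp (k * t) - Real.exp (k * s)) / k) := by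
    intro s t
    have : (∫ r in s..t, ‖deriv (fun s : ℝ => (WithLp.equiv 2 (Fin 2 → ℝ)).symm
        ![Real.exp (k * s) * Real.cos s, Real.exp (k * s) * Real.sin s]) r‖)
        = ∫ r in s..t, Real.sqrt (k ^ 2 + 1) * Real.exp (k * r) := by
      apply intervalIntegral.integral_congr
      intro r _
      exact hdn r
    rw [this, intervalIntegral.integral_const_mul,
      intervalIntegral.integral_comp_mul_left (fun x => Real.exp x) hk', integral_exp, smul_eq_mul]
    field_simp
  -- chord norm
  have hchord : ∀ s t : ℝ, ‖(WithLp.equiv 2 (Fin 2 → ℝ)).symm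
        ![Real.exp (k * t) * Real.cos t, Real.exp (k * t) * Real.sin t]
      - (WithLp.equiv 2 (Fin 2 → ℝ)).symm
        ![Real.exp (k * s) * Real.cos s, Real.exp (k * s) * Real.sin s]‖
      = Real.sqrt ((Real.exp (k * t) * Real.cos t - Real.exp (k * s) * Real.cos s) ^ 2
        + (Real.exp (k * t) * Real.sin t - Real.exp (k * s) * Real.sin s) ^ 2) := by
    intro s t
    rw [eucl_sub_pair, eucl_norm_pair]
  -- chord lower bound
  have hge : ∀ s t : ℝ, s < t →
      Real.exp (k * t) - Real.exp (k * s) ≤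
      Real.sqrt ((Real.exp (k * t) * Real.cos t - Real.exp (k * s) * Real.cos s) ^ 2
        + (Real.exp (k * t) * Real.sin t - Real.exp (k * s) * Real.sin s) ^ 2) := by
    intro s t hst
    have hcos : Real.cos t * Real.cos s + Real.sin t * Real.sin s ≤ 1 := by
      have := Real.cos_le_one (t - s)
      rw [Real.cos_sub] at this
      linarith
    apply Real.le_sqrt' (by
      have := Real.exp_lt_exp.mpr (mul_lt_mul_of_pos_left hst hk)
      linarith) |>.mpr
    · have key : (Real.exp (k * t) * Real.cos t - Real.exp (k * s) * Real.cos s) ^ 2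
          + (Real.exp (k * t) * Real.sin t - Real.exp (k * s) * Real.sin s) ^ 2
          = Real.exp (k * t) ^ 2 + Real.exp (k * s) ^ 2
            - 2 * Real.exp (k * t) * Real.exp (k * s)
              * (Real.cos t * Real.cos s + Real.sin t * Real.sin s) := by
        linear_combination Real.exp (k * t) ^ 2 * Real.sin_sq_add_cos_sq t
          + Real.exp (k * s) ^ 2 * Real.sin_sq_add_cos_sq s
      rw [key]
      nlinarith [mul_nonneg (mul_pos (Real.exp_pos (k * t)) (Real.exp_pos (k * s))).le
          (by linarith : (0:ℝ) ≤ 1 - (Real.cos t * Real.cos s + Real.sin t * Real.sin s))]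
  apply IsGreatest.csSup_eq
  constructor
  · -- membership: s = 0, t = 2π
    refine ⟨0, 2 * π, by positivity, ?_⟩
    have hE : 1 < Real.exp (k * (2 * π)) := by
      rw [← Real.exp_zero]
      exact Real.exp_lt_exp.mpr (by positivity)
    rw [hint, hchord]
    have h1 : Real.exp (k * 0) = 1 := by norm_num
    rw [h1]
    simp only [Real.cos_two_pi, Real.sin_two_pi, Real.cos_zero, Real.sin_zero]
    rw [mul_one, mul_one, mul_zero, mul_zero, sub_zero]
    have : Real.sqrt ((Real.exp (k * (2 * π)) - 1) ^ 2 + 0 ^ 2)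
        = Real.exp (k * (2 * π)) - 1 := by
      rw [show (Real.exp (k * (2 * π)) - 1) ^ 2 + 0 ^ 2
          = (Real.exp (k * (2 * π)) - 1) ^ 2 by ring]
      exact Real.sqrt_sq (by linarith)
    rw [this]
    have h2 : Real.exp (k * (2 * π)) - 1 ≠ 0 := by linarith
    field_simp
    rw [← mul_assoc] at h2
    exact (div_self h2).symm
  · -- upper bound
    rintro x ⟨s, t, hst, rfl⟩
    rw [hint, hchord]
    set D := Real.exp (k * t) - Real.exp (k * s) with hD
    have hDpos : 0 < D :=
      sub_pos.mpr (Real.exp_lt_exp.mpr (mul_lt_mul_of_pos_left hst hk))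
    have hle := hge s t hst
    set N := Real.sqrt ((Real.exp (k * t) * Real.cos t - Real.exp (k * s) * Real.cos s) ^ 2
        + (Real.exp (k * t) * Real.sin t - Real.exp (k * s) * Real.sin s) ^ 2)
    have hNpos : 0 < N := lt_of_lt_of_le hDpos hle
    rw [div_le_iff₀ hNpos]
    calc Real.sqrt (k ^ 2 + 1) * (D / k) = Real.sqrt (k ^ 2 + 1) / k * D := by ring
    _ ≤ Real.sqrt (k ^ 2 + 1) / k * N := by
        apply mul_le_mul_of_nonneg_left hle (by positivity)
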